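/- Let g be the 4-dimensional Lie algebra rr_{3,-1} with basis e₁,...,e₄ and nonzero brackets [e₁,e₂] = e₂, [e₁,e₃] = -e₃. Then ω = e¹∧e² + e³∧e⁴ with θ = e¹ is a LCS structure on g (ω non-degenerate, θ closed, dω = θ ∧ ω), and it is of the second kind: θ vanishes on every infinitesimal automorphism of ω. -/

import Mathlib

section
variable {L : Type*} [LieRing L] [LieAlgebra ℝ L]

lemma rr3_bracket (e : Module.Basis (Fin 4) ℝ L)
    (h01 : ⁅e 0, e 1⁆ = e 1) (h02 : ⁅e 0, e 2⁆ = -e 2)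
    (h03 : ⁅e 0, e 3⁆ = 0) (h12 : ⁅e 1, e 2⁆ = 0)
    (h13 : ⁅e 1, e 3⁆ = 0) (h23 : ⁅e 2, e 3⁆ = 0) (X Y : L) :
    ⁅X, Y⁆ = (e.repr X 0 * e.repr Y 1 - e.repr X 1 * e.repr Y 0) • e 1
      + (e.repr X 2 * e.repr Y 0 - e.repr X 0 * e.repr Y 2) • e 2 := by
  have h10 : ⁅e 1, e 0⁆ = -e 1 := by rw [← lie_skew, h01]
  have h20 : ⁅e 2, e 0⁆ = e 2 := by rw [← lie_skew, h02]; simp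
  have h30 : ⁅e 3, e 0⁆ = 0 := by rw [← lie_skew, h03]; simp
  have h21 : ⁅e 2, e 1⁆ = 0 := by rw [← lie_skew, h12]; simp
  have h31 : ⁅e 3, e 1⁆ = 0 := by rw [← lie_skew, h13]; simp
  have h32 : ⁅e 3, e 2⁆ = 0 := by rw [← lie_skew, h23]; simp
  conv_lhs => rw [← e.sum_repr X, ← e.sum_repr Y]
  simp only [Fin.sum_univ_four, add_lie, lie_add, smul_lie, lie_smul, lie_self,
    h01, h02, h03, h12, h13, h23, h10, h20, h30, h21, h31, h32,
    smul_zero, zero_add, add_zero, smul_neg, smul_smul]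
  module
end

theorem rr3_minus_one_second_kind {L : Type*} [LieRing L] [LieAlgebra ℝ L]
    (e : Module.Basis (Fin 4) ℝ L)
    (h01 : ⁅e 0, e 1⁆ = e 1) (h02 : ⁅e 0, e 2⁆ = -e 2)
    (h03 : ⁅e 0, e 3⁆ = 0) (h12 : ⁅e 1, e 2⁆ = 0)
    (h13 : ⁅e 1, e 3⁆ = 0) (h23 : ⁅e 2, e 3⁆ = 0) :
    (let c : Fin 4 → L →ₗ[ℝ] ℝ := fun i => e.coord i
     let ω : L → L → ℝ := fun X Y =>
       c 0 X * c 1 Y - c 1 X * c 0 Y + c 2 X * c 3 Y - c 3 X * c 2 Y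
     let θ : L → ℝ := fun X => c 0 X
     -- ω is non-degenerate
     (∀ X : L, X ≠ 0 → ∃ Y : L, ω X Y ≠ 0) ∧
     -- θ is closed
     (∀ X Y : L, θ ⁅X, Y⁆ = 0) ∧
     -- dω = θ ∧ ω
     (∀ X Y Z : L, -ω ⁅X, Y⁆ Z + ω ⁅X, Z⁆ Y - ω ⁅Y, Z⁆ X
        = θ X * ω Y Z - θ Y * ω X Z + θ Z * ω X Y) ∧
     -- second kind: θ vanishes on every infinitesimal automorphism of ω
     (∀ X : L, (∀ Y Z : L, ω ⁅X, Y⁆ Z + ω Y ⁅X, Z⁆ = 0) → θ X = 0)) := by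
  intro c ω θ
  have hb := rr3_bracket e h01 h02 h03 h12 h13 h23
  have hc : ∀ (i : Fin 4) (X : L), c i X = e.repr X i := fun i X => rfl
  have k0 : ∀ X Y : L, e.repr ⁅X, Y⁆ 0 = 0 := by
    intro X Y; rw [hb]; simp [Finsupp.single_apply]
  have k1 : ∀ X Y : L, e.repr ⁅X, Y⁆ 1 = e.repr X 0 * e.repr Y 1 - e.repr X 1 * e.repr Y 0 := by
    intro X Y; rw [hb]; simp [Finsupp.single_apply]
  have k2 : ∀ X Y : L, e.repr ⁅X, Y⁆ 2 = e.repr X 2 * e.repr Y 0 - e.repr X 0 * e.repr Y 2 := by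
    intro X Y; rw [hb]; simp [Finsupp.single_apply]
  have k3 : ∀ X Y : L, e.repr ⁅X, Y⁆ 3 = 0 := by
    intro X Y; rw [hb]; simp [Finsupp.single_apply]
  refine ⟨?_, ?_, ?_, ?_⟩
  · intro X hX
    by_cases h0 : c 0 X ≠ 0
    · refine ⟨e 1, ?_⟩
      simpa (config := { decide := true }) [ω, hc, Module.Basis.repr_self, Finsupp.single_apply] using h0
    push_neg at h0
    by_cases h1 : c 1 X ≠ 0
    · refine ⟨e 0, ?_⟩
      simpa (config := { decide := true }) [ω, hc, Module.Basis.repr_self, Finsupp.single_apply] using h1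
    push_neg at h1
    by_cases h2 : c 2 X ≠ 0
    · refine ⟨e 3, ?_⟩
      simpa (config := { decide := true }) [ω, hc, Module.Basis.repr_self, Finsupp.single_apply] using h2
    push_neg at h2
    by_cases h3 : c 3 X ≠ 0
    · refine ⟨e 2, ?_⟩
      simpa (config := { decide := true }) [ω, hc, Module.Basis.repr_self, Finsupp.single_apply] using h3
    push_neg at h3
    exfalso
    apply hX
    have := e.sum_repr X
    rw [← this]
    simp only [Fin.sum_univ_four]
    rw [← hc 0 X, ← hc 1 X, ← hc 2 X, ← hc 3 X, h0, h1, h2, h3]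
    simp
  · intro X Y
    simp only [θ, hc, k0]
  · intro X Y Z
    simp only [ω, θ, hc, k0, k1, k2, k3]
    ring
  · intro X hX
    have h := hX (e 1) (e 0)
    simp only [ω, hc, k0, k1, k2, k3, Module.Basis.repr_self] at h
    simp (config := { decide := true }) [Finsupp.single_apply] at h
    simp only [θ, hc]
    linarith
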